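/- Let T : A^r → F be an r-dimensional semi-diagonal tensor over a field F, where A is a finite set. Then the maximum over i ∈ [r] of the i-flattening rank of T is at least |A|/(r−1). -/

import Mathlib

open Submodule Module

theorem stmt3_aux (F : Type) [Field F] (A : Type) [Fintype A] [DecidableEq A]
    (r : ℕ) (hr : 0 < r) (T : (Fin r → A) → F)
    (hdiag : ∀ x : A, T (fun _ => x) ≠ 0)
    (M : (i : Fin r) → Matrix A ({j : Fin r // j ≠ i} → A) F)
    (hM : ∀ (i : Fin r) (a : A) (b : {j : Fin r // j ≠ i} → A),
      M i a b = T (fun j => if h : j = i then a else b ⟨j, h⟩)) :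
    ∀ s : ℕ, 1 ≤ s → s ≤ r → ∀ A' : Finset A,
      (∀ a : Fin r → A, (∀ j : Fin r, (j : ℕ) < s → a j ∈ A') →
        (∀ j k : Fin r, (j : ℕ) < s → (k : ℕ) < s → j ≠ k → a j ≠ a k) →
        T (fun j => if (j : ℕ) < s then a j else a ⟨0, hr⟩) = 0) →
      A'.card ≤ ∑ i ∈ Finset.univ.filter (fun i : Fin r => 1 ≤ (i : ℕ) ∧ (i : ℕ) < s),
        (M i).rank := by
  intro s hs1
  induction s, hs1 using Nat.le_induction with
  | base =>
    intro _ A' hP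
    have hA : A' = ∅ := by
      apply Finset.eq_empty_of_forall_notMem
      intro x hx
      have h0 := hP (fun _ => x) (fun j _ => hx)
        (fun j k hj hk hjk => absurd (Fin.ext (by omega)) hjk)
      exact hdiag x (by simpa using h0)
    simp [hA]
  | succ s hs1 IH =>
    intro hsr A' hP
    classical
    rcases A'.eq_empty_or_nonempty with hA | ⟨x0, hx0⟩
    · simp [hA]
    have hsr' : s ≤ r := le_trans (Nat.le_succ s) hsr
    have hslt : s < r := hsr
    set i0 : Fin r := ⟨s, hslt⟩ with hi0
    set v : A → ((Fin r → A) → F) :=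
      fun x c => T (fun j => if (j : ℕ) < s then c j else if (j : ℕ) = s then x
        else c ⟨0, hr⟩) with hv
    set g : (Fin r → A) → ({j : Fin r // j ≠ i0} → A) :=
      fun c j => if ((j : Fin r) : ℕ) < s then c j else c ⟨0, hr⟩ with hg
    have hv_eq : ∀ x, v x = (LinearMap.funLeft F F g) (M i0 x) := by
      intro x
      funext c
      show T _ = M i0 x (g c)
      rw [hM]
      congr 1
      funext j
      by_cases h : j = i0
      · subst h
        simp [hi0]
      · have hjs : (j : ℕ) ≠ s := fun hc => h (Fin.ext (by simpa [hi0] using hc))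
        simp only [dif_neg h, hg]
        by_cases h2 : (j : ℕ) < s <;> simp [h2, hjs]
    haveI : Module.Finite F (span F (Set.range (M i0))) :=
      FiniteDimensional.span_of_finite F (Set.finite_range _)
    have hVle : finrank F (span F (v '' (A' : Set A))) ≤ (M i0).rank := by
      have hsub : span F (v '' (A' : Set A)) ≤
          (span F (Set.range (M i0))).map (LinearMap.funLeft F F g) := by
        rw [Submodule.map_span]
        apply span_mono
        rintro u ⟨x, hx, rfl⟩
        exact ⟨M i0 x, Set.mem_range_self x, (hv_eq x).symm⟩
      calc finrank F (span F (v '' (A' : Set A)))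
          ≤ finrank F ((span F (Set.range (M i0))).map (LinearMap.funLeft F F g)) :=
            Submodule.finrank_mono hsub
        _ ≤ finrank F (span F (Set.range (M i0))) :=
            Submodule.finrank_map_le _ _
        _ = (M i0).rank := ((M i0).rank_eq_finrank_span_row).symm
    obtain ⟨b, hb_sub, hb_span, hb_ind⟩ := exists_linearIndependent F (v '' (A' : Set A))
    have hb_fin : b.Finite := ((A'.finite_toSet).image v).subset hb_sub
    haveI := hb_fin.fintype
    set pick : ((Fin r → A) → F) → A :=
      fun u => if h : ∃ x, x ∈ (A' : Set A) ∧ v x = u then h.choose else x0 with hpickdef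
    have hpick : ∀ u ∈ b, pick u ∈ A' ∧ v (pick u) = u := by
      intro u hu
      obtain ⟨x, hx, hxu⟩ := hb_sub hu
      have hex : ∃ x, x ∈ (A' : Set A) ∧ v x = u := ⟨x, hx, hxu⟩
      simp only [hpickdef, dif_pos hex]
      exact ⟨hex.choose_spec.1, hex.choose_spec.2⟩
    set B : Finset A := hb_fin.toFinset.image pick with hB
    have hBA : B ⊆ A' := by
      intro x hx
      obtain ⟨u, hu, rfl⟩ := Finset.mem_image.mp hx
      exact (hpick u (hb_fin.mem_toFinset.mp hu)).1
    have hBcard : B.card ≤ (M i0).rank := by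
      calc B.card ≤ hb_fin.toFinset.card := Finset.card_image_le
        _ = Fintype.card b := by rw [Set.Finite.card_toFinset]
        _ = finrank F (span F b) := by
              rw [finrank_span_set_eq_card hb_ind, Set.toFinset_card]
        _ = finrank F (span F (v '' (A' : Set A))) := by rw [hb_span]
        _ ≤ (M i0).rank := hVle
    have hspanB : span F (v '' (A' : Set A)) ≤ span F (v '' (B : Set A)) := by
      rw [← hb_span]
      apply span_le.mpr
      intro u hu
      have h1 : pick u ∈ B :=
        Finset.mem_image.mpr ⟨u, hb_fin.mem_toFinset.mpr hu, rfl⟩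
      have h2 : v (pick u) = u := (hpick u hu).2
      exact subset_span ⟨pick u, h1, h2⟩
    have hP' : ∀ a : Fin r → A, (∀ j : Fin r, (j : ℕ) < s → a j ∈ A' \ B) →
        (∀ j k : Fin r, (j : ℕ) < s → (k : ℕ) < s → j ≠ k → a j ≠ a k) →
        T (fun j => if (j : ℕ) < s then a j else a ⟨0, hr⟩) = 0 := by
      intro a hmem hdist
      have ha0 : a ⟨0, hr⟩ ∈ A' \ B := hmem _ (by simpa using Nat.lt_of_lt_of_le Nat.zero_lt_one hs1)
      have ha0' : a ⟨0, hr⟩ ∈ A' := (Finset.mem_sdiff.mp ha0).1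
      have hmem_span : v (a ⟨0, hr⟩) ∈
          span F (Set.range (fun x : {x // x ∈ B} => v ↑x)) := by
        have h1 : v (a ⟨0, hr⟩) ∈ span F (v '' (A' : Set A)) :=
          subset_span ⟨_, ha0', rfl⟩
        have h2 := hspanB h1
        rwa [Set.image_eq_range v (B : Set A)] at h2
      obtain ⟨cf, hcf⟩ := (mem_span_range_iff_exists_fun F).mp hmem_span
      have hvzero : ∀ x : A, x ∈ B → v x a = 0 := by
        intro x hxB
        set a' : Fin r → A := fun j => if (j : ℕ) = s then x else a j with ha'
        have hmem' : ∀ j : Fin r, (j : ℕ) < s + 1 → a' j ∈ A' := by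
          intro j hj
          by_cases h : (j : ℕ) = s
          · simpa [ha', h] using hBA hxB
          · have : (j : ℕ) < s := by omega
            have := hmem j this
            simpa [ha', h] using (Finset.mem_sdiff.mp this).1
        have hdist' : ∀ j k : Fin r, (j : ℕ) < s + 1 → (k : ℕ) < s + 1 → j ≠ k →
            a' j ≠ a' k := by
          intro j k hj hk hjk
          by_cases h1 : (j : ℕ) = s <;> by_cases h2 : (k : ℕ) = s
          · exact absurd (Fin.ext (by omega)) hjk
          · have hk' : (k : ℕ) < s := by omega
            have : a k ∈ A' \ B := hmem k hk'
            have hnB : a k ∉ B := (Finset.mem_sdiff.mp this).2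
            simp only [ha', if_pos h1, if_neg h2]
            exact fun hc => hnB (hc ▸ hxB)
          · have hj' : (j : ℕ) < s := by omega
            have : a j ∈ A' \ B := hmem j hj'
            have hnB : a j ∉ B := (Finset.mem_sdiff.mp this).2
            simp only [ha', if_neg h1, if_pos h2]
            exact fun hc => hnB (hc ▸ hxB)
          · have hj' : (j : ℕ) < s := by omega
            have hk' : (k : ℕ) < s := by omega
            simpa [ha', h1, h2] using hdist j k hj' hk' hjk
        have h0 := hP a' hmem' hdist'
        have heq : (fun j : Fin r => if (j : ℕ) < s + 1 then a' j else a' ⟨0, hr⟩) =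
            (fun j : Fin r => if (j : ℕ) < s then a j else if (j : ℕ) = s then x
              else a ⟨0, hr⟩) := by
          funext j
          have h00 : a' ⟨0, hr⟩ = a ⟨0, hr⟩ := by
            simp only [ha']
            have : (0 : ℕ) ≠ s := by omega
            simp [this]
          by_cases h1 : (j : ℕ) < s
          · have : (j : ℕ) < s + 1 := by omega
            have hne : (j : ℕ) ≠ s := by omega
            simp [this, h1, ha', hne]
          · by_cases h2 : (j : ℕ) = s
            · have : (j : ℕ) < s + 1 := by omega
              simp [this, h1, h2, ha']
            · have : ¬ ((j : ℕ) < s + 1) := by omega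
              simp [this, h1, h2, h00]
        rw [heq] at h0
        exact h0
      have hcol := congrFun hcf a
      rw [Finset.sum_apply] at hcol
      have hL : (fun j : Fin r => if (j : ℕ) < s then a j else a ⟨0, hr⟩) =
          (fun j : Fin r => if (j : ℕ) < s then a j else if (j : ℕ) = s then a ⟨0, hr⟩
            else a ⟨0, hr⟩) := by
        funext j
        by_cases h1 : (j : ℕ) < s <;> simp [h1]
      show T _ = 0
      rw [hL]
      have : v (a ⟨0, hr⟩) a = 0 := by
        rw [← hcol]
        apply Finset.sum_eq_zero
        intro x _
        have := hvzero ↑x x.2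
        simp [this]
      exact this
    have hIH := IH hsr' (A' \ B) hP'
    have hcards : (A' \ B).card + B.card = A'.card :=
      Finset.card_sdiff_add_card_eq_card hBA
    have hset : Finset.univ.filter (fun i : Fin r => 1 ≤ (i : ℕ) ∧ (i : ℕ) < s + 1) =
        insert i0 (Finset.univ.filter (fun i : Fin r => 1 ≤ (i : ℕ) ∧ (i : ℕ) < s)) := by
      ext i
      simp only [Finset.mem_filter, Finset.mem_univ, true_and, Finset.mem_insert,
        Fin.ext_iff, hi0]
      omega
    have hnotmem : i0 ∉ Finset.univ.filter (fun i : Fin r => 1 ≤ (i : ℕ) ∧ (i : ℕ) < s) := by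
      simp [hi0]
    rw [hset, Finset.sum_insert hnotmem]
    omega

/-- A semi-diagonal r-dimensional tensor on A^r has some flattening rank
at least |A|/(r-1). -/
theorem stmt_3 (F : Type) [Field F] (A : Type) [Fintype A] [DecidableEq A]
    (r : ℕ) (hr : 0 < r) (T : (Fin r → A) → F)
    (hzero : ∀ a : Fin r → A, Function.Injective a → T a = 0)
    (hdiag : ∀ x : A, T (fun _ => x) ≠ 0)
    (M : (i : Fin r) → Matrix A ({j : Fin r // j ≠ i} → A) F)
    (hM : ∀ (i : Fin r) (a : A) (b : {j : Fin r // j ≠ i} → A),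
      M i a b = T (fun j => if h : j = i then a else b ⟨j, h⟩)) :
    ∃ i : Fin r, (Fintype.card A : ℝ) / ((r : ℝ) - 1) ≤ ((M i).rank : ℝ) := by
  have hPr : ∀ a : Fin r → A, (∀ j : Fin r, (j : ℕ) < r → a j ∈ Finset.univ) →
      (∀ j k : Fin r, (j : ℕ) < r → (k : ℕ) < r → j ≠ k → a j ≠ a k) →
      T (fun j => if (j : ℕ) < r then a j else a ⟨0, hr⟩) = 0 := by
    intro a _ hdist
    have ha : (fun j : Fin r => if (j : ℕ) < r then a j else a ⟨0, hr⟩) = a :=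
      funext fun j => if_pos j.isLt
    rw [ha]
    apply hzero
    intro j k hjk
    by_contra hne
    exact hdist j k j.isLt k.isLt hne hjk
  have key := stmt3_aux F A r hr T hdiag M hM r hr le_rfl Finset.univ hPr
  rw [Finset.card_univ] at key
  obtain ⟨imax, -, hmax⟩ := Finset.exists_max_image Finset.univ (fun i => (M i).rank)
    ⟨⟨0, hr⟩, Finset.mem_univ _⟩
  refine ⟨imax, ?_⟩
  have hfcard : (Finset.univ.filter (fun i : Fin r => 1 ≤ (i : ℕ) ∧ (i : ℕ) < r)).card
      = r - 1 := by
    have hfe : Finset.univ.filter (fun i : Fin r => 1 ≤ (i : ℕ) ∧ (i : ℕ) < r)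
        = Finset.univ.erase ⟨0, hr⟩ := by
      ext i
      rw [Finset.mem_filter, Finset.mem_erase]
      have hlt := i.isLt
      constructor
      · rintro ⟨-, h1, -⟩
        refine ⟨fun hc => ?_, Finset.mem_univ _⟩
        subst hc
        exact Nat.not_succ_le_zero 0 h1
      · rintro ⟨hne, -⟩
        refine ⟨Finset.mem_univ _, ?_, hlt⟩
        by_contra h
        push_neg at h
        exact hne (Fin.ext (show (i : ℕ) = 0 by omega))
    rw [hfe, Finset.card_erase_of_mem (Finset.mem_univ _), Finset.card_univ,
      Fintype.card_fin]
  have hsum : ∑ i ∈ Finset.univ.filter (fun i : Fin r => 1 ≤ (i : ℕ) ∧ (i : ℕ) < r),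
      (M i).rank ≤ (r - 1) * (M imax).rank := by
    calc _ ≤ (Finset.univ.filter (fun i : Fin r => 1 ≤ (i : ℕ) ∧ (i : ℕ) < r)).card
          * (M imax).rank :=
        Finset.sum_le_card_nsmul _ _ _ (fun i _ => hmax i (Finset.mem_univ i))
      _ = (r - 1) * (M imax).rank := by rw [hfcard]
  have hkey2 : Fintype.card A ≤ (r - 1) * (M imax).rank := le_trans key hsum
  rcases Nat.lt_or_ge r 2 with h2 | h2
  · have hr1 : r = 1 := by omega
    subst hr1
    have hA0 : Fintype.card A = 0 := by simpa using hkey2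
    rw [hA0]
    simp
  · have hpos : (0 : ℝ) < (r : ℝ) - 1 := by
      have : (2 : ℝ) ≤ (r : ℝ) := by exact_mod_cast h2
      linarith
    rw [div_le_iff₀ hpos]
    have hcast : ((r : ℝ) - 1) = ((r - 1 : ℕ) : ℝ) := by
      have h1 : (1 : ℕ) ≤ r := hr
      push_cast [Nat.cast_sub h1]
      ring
    rw [hcast, ← Nat.cast_mul]
    exact_mod_cast by rw [Nat.mul_comm] at hkey2; exact hkey2
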